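/- Let f : ℝ^d → ℝ and let {g_i}_{i∈I} be a family of functions such that for some points {x_i}_{i∈I} ⊂ ℝ^d one has f = g_i on the ball B(x_i, 20√d·L) for each i, and the support of f is contained in the union of the balls B(x_i, 10√d·L). Then the rescaled Hölder norm of f at scale L satisfies |f|_L ≤ 3 sup_{i∈I} |g_i|_L. -/

import Mathlib

open MeasureTheory Real

noncomputable section

/-- The rescaled Hölder norm `|f|_L = sup |f| + L^β · sup_{x≠y} |f x - f y| / |x-y|^β`. -/
def holNorm (d : ℕ) (β L : ℝ) (f : EuclideanSpace ℝ (Fin d) → ℝ) : ℝ :=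
  (⨆ x : EuclideanSpace ℝ (Fin d), |f x|) +
    L ^ β * ⨆ p : {q : EuclideanSpace ℝ (Fin d) × EuclideanSpace ℝ (Fin d) // q.1 ≠ q.2},
      |f p.val.1 - f p.val.2| / ‖p.val.1 - p.val.2‖ ^ β

/-- a function agreeing with bounded Hölder functions `g i` on balls
`B(x_i, 20√d·L)` and supported in `⋃ B(x_i, 10√d·L)` satisfies
`|f|_L ≤ 3 sup_i |g i|_L`. -/
theorem holNorm_extension (d : ℕ) (β L : ℝ) (hβ : 0 < β) (hβ1 : β ≤ 1) (hL : 0 < L)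
    {I : Type*} (g : I → EuclideanSpace ℝ (Fin d) → ℝ) (xs : I → EuclideanSpace ℝ (Fin d))
    (f : EuclideanSpace ℝ (Fin d) → ℝ)
    (hgb : ∀ i, ∃ M, ∀ x, |g i x| ≤ M)
    (hgh : ∀ i, ∃ H, ∀ x y, |g i x - g i y| ≤ H * ‖x - y‖ ^ β)
    (hagree : ∀ i, ∀ y ∈ Metric.ball (xs i) (20 * Real.sqrt d * L), f y = g i y)
    (hsupp : Function.support f ⊆ ⋃ i, Metric.ball (xs i) (10 * Real.sqrt d * L))
    (hbdd : BddAbove (Set.range fun i => holNorm d β L (g i))) :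
    holNorm d β L f ≤ 3 * ⨆ i, holNorm d β L (g i) := by
  classical
  have hLβ : (0:ℝ) < L ^ β := Real.rpow_pos_of_pos hL β
  set S := ⨆ i, holNorm d β L (g i) with hSdef
  -- denominators are positive for distinct points
  have hden : ∀ (x y : EuclideanSpace ℝ (Fin d)), x ≠ y → (0:ℝ) < ‖x - y‖ ^ β := by
    intro x y hxy
    exact Real.rpow_pos_of_pos (by simpa [sub_ne_zero] using hxy) β
  -- second summand of holNorm is nonneg
  have hsecond : ∀ (h : EuclideanSpace ℝ (Fin d) → ℝ),
      0 ≤ L ^ β * ⨆ p : {q : EuclideanSpace ℝ (Fin d) × EuclideanSpace ℝ (Fin d) // q.1 ≠ q.2},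
        |h p.val.1 - h p.val.2| / ‖p.val.1 - p.val.2‖ ^ β := by
    intro h
    refine mul_nonneg hLβ.le (Real.iSup_nonneg fun p => ?_)
    exact div_nonneg (abs_nonneg _) (Real.rpow_nonneg (norm_nonneg _) β)
  -- sup bound for each g i
  have hsupg : ∀ i x, |g i x| ≤ holNorm d β L (g i) := by
    intro i x
    have hb : BddAbove (Set.range fun x => |g i x|) := by
      obtain ⟨M, hM⟩ := hgb i
      exact ⟨M, by rintro _ ⟨x, rfl⟩; exact hM x⟩
    calc |g i x| ≤ ⨆ x, |g i x| := le_ciSup hb x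
      _ ≤ holNorm d β L (g i) := le_add_of_nonneg_right (hsecond (g i))
  -- Hölder bound for each g i
  have hholg : ∀ i (x y : EuclideanSpace ℝ (Fin d)), x ≠ y →
      L ^ β * (|g i x - g i y| / ‖x - y‖ ^ β) ≤ holNorm d β L (g i) := by
    intro i x y hxy
    obtain ⟨H, hH⟩ := hgh i
    have hb : BddAbove (Set.range fun p : {q : EuclideanSpace ℝ (Fin d) ×
        EuclideanSpace ℝ (Fin d) // q.1 ≠ q.2} =>
        |g i p.val.1 - g i p.val.2| / ‖p.val.1 - p.val.2‖ ^ β) := by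
      refine ⟨H, ?_⟩
      rintro _ ⟨p, rfl⟩
      rw [div_le_iff₀ (hden _ _ p.2)]
      exact hH _ _
    have h1 : |g i x - g i y| / ‖x - y‖ ^ β ≤
        ⨆ p : {q : EuclideanSpace ℝ (Fin d) × EuclideanSpace ℝ (Fin d) // q.1 ≠ q.2},
          |g i p.val.1 - g i p.val.2| / ‖p.val.1 - p.val.2‖ ^ β :=
      le_ciSup hb ⟨(x, y), hxy⟩
    have h2 := mul_le_mul_of_nonneg_left h1 hLβ.le
    have hA : 0 ≤ ⨆ x, |g i x| := Real.iSup_nonneg fun x => abs_nonneg _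
    calc L ^ β * (|g i x - g i y| / ‖x - y‖ ^ β)
        ≤ L ^ β * ⨆ p : {q : EuclideanSpace ℝ (Fin d) ×
            EuclideanSpace ℝ (Fin d) // q.1 ≠ q.2},
            |g i p.val.1 - g i p.val.2| / ‖p.val.1 - p.val.2‖ ^ β := h2
      _ ≤ holNorm d β L (g i) := le_add_of_nonneg_left hA
  by_cases hI : Nonempty I
  · -- main case
    obtain ⟨i₀⟩ := hI
    have hgle : ∀ i, holNorm d β L (g i) ≤ S := fun i => le_ciSup hbdd i
    have hnn0 : 0 ≤ holNorm d β L (g i₀) := by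
      rw [holNorm]
      exact add_nonneg (Real.iSup_nonneg fun x => abs_nonneg _) (hsecond (g i₀))
    have hS0 : 0 ≤ S := hnn0.trans (hgle i₀)
    -- sup bound for f
    have hfS : ∀ x, |f x| ≤ S := by
      intro x
      by_cases hx : f x = 0
      · simpa [hx] using hS0
      · obtain ⟨s, ⟨i, rfl⟩, hxs⟩ := hsupp hx
        have hx20 : x ∈ Metric.ball (xs i) (20 * Real.sqrt d * L) := by
          refine Metric.ball_subset_ball ?_ hxs
          have hsd : (0:ℝ) ≤ Real.sqrt d := Real.sqrt_nonneg _
          nlinarith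
        rw [hagree i x hx20]
        exact (hsupg i x).trans (hgle i)
    -- Hölder bound for f when one value is nonzero and points are close
    have hclose : ∀ (x y : EuclideanSpace ℝ (Fin d)), x ≠ y → ‖x - y‖ < L → f x ≠ 0 →
        L ^ β * (|f x - f y| / ‖x - y‖ ^ β) ≤ 2 * S := by
      intro x y hxy hlt hx
      have hd1 : (1:ℝ) ≤ Real.sqrt d := by
        rcases Nat.eq_zero_or_pos d with hd | hd
        · exfalso
          apply hxy
          subst hd
          exact PiLp.ext fun j => Fin.elim0 j
        · rw [show (1:ℝ) = Real.sqrt 1 by simp]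
          exact Real.sqrt_le_sqrt (by exact_mod_cast hd)
      obtain ⟨s, ⟨i, rfl⟩, hxs⟩ := hsupp hx
      have hx20 : x ∈ Metric.ball (xs i) (20 * Real.sqrt d * L) := by
        refine Metric.ball_subset_ball ?_ hxs
        nlinarith [Real.sqrt_nonneg (d:ℝ)]
      have hy20 : y ∈ Metric.ball (xs i) (20 * Real.sqrt d * L) := by
        rw [Metric.mem_ball] at hxs ⊢
        have h1 : dist y (xs i) ≤ dist y x + dist x (xs i) := dist_triangle _ _ _
        have h2 : dist y x < L := by rw [dist_comm, dist_eq_norm]; exact hlt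
        nlinarith [Real.sqrt_nonneg (d:ℝ)]
      rw [hagree i x hx20, hagree i y hy20]
      calc L ^ β * (|g i x - g i y| / ‖x - y‖ ^ β) ≤ holNorm d β L (g i) :=
            hholg i x y hxy
        _ ≤ S := hgle i
        _ ≤ 2 * S := by linarith
    -- the full pairwise Hölder bound
    have hpair : ∀ (x y : EuclideanSpace ℝ (Fin d)), x ≠ y →
        L ^ β * (|f x - f y| / ‖x - y‖ ^ β) ≤ 2 * S := by
      intro x y hxy
      by_cases hfar : L ≤ ‖x - y‖
      · have habs : |f x - f y| ≤ 2 * S :=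
          (abs_sub _ _).trans (by linarith [hfS x, hfS y])
        have hpow : L ^ β ≤ ‖x - y‖ ^ β :=
          Real.rpow_le_rpow hL.le hfar hβ.le
        have hq : |f x - f y| / ‖x - y‖ ^ β ≤ 2 * S / L ^ β := by
          refine div_le_div₀ (by linarith) habs hLβ hpow
        calc L ^ β * (|f x - f y| / ‖x - y‖ ^ β) ≤ L ^ β * (2 * S / L ^ β) :=
              mul_le_mul_of_nonneg_left hq hLβ.le
          _ = 2 * S := by field_simp
      · push_neg at hfar
        by_cases hx : f x = 0
        · by_cases hy : f y = 0
          · simp [hx, hy]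
            positivity
          · have := hclose y x hxy.symm (by rwa [norm_sub_rev]) hy
            rwa [abs_sub_comm, norm_sub_rev] at this
        · exact hclose x y hxy hfar hx
    -- assemble
    rw [holNorm]
    have hA : (⨆ x, |f x|) ≤ S := ciSup_le hfS
    have hB : (⨆ p : {q : EuclideanSpace ℝ (Fin d) ×
        EuclideanSpace ℝ (Fin d) // q.1 ≠ q.2},
        |f p.val.1 - f p.val.2| / ‖p.val.1 - p.val.2‖ ^ β) ≤ 2 * S / L ^ β := by
      refine Real.iSup_le (fun p => ?_) (by positivity)
      rw [le_div_iff₀ hLβ, mul_comm]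
      exact hpair _ _ p.2
    have hB' : L ^ β * (⨆ p : {q : EuclideanSpace ℝ (Fin d) ×
        EuclideanSpace ℝ (Fin d) // q.1 ≠ q.2},
        |f p.val.1 - f p.val.2| / ‖p.val.1 - p.val.2‖ ^ β) ≤ 2 * S := by
      calc _ ≤ L ^ β * (2 * S / L ^ β) := mul_le_mul_of_nonneg_left hB hLβ.le
        _ = 2 * S := by field_simp
    linarith
  · -- empty index type: f = 0
    have hf0 : ∀ x, f x = 0 := by
      intro x
      by_contra hx
      obtain ⟨s, ⟨i, rfl⟩, -⟩ := hsupp hx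
      exact hI ⟨i⟩
    have hS0 : S = 0 := by
      haveI : IsEmpty I := not_nonempty_iff.mp hI
      exact Real.iSup_of_isEmpty _
    rw [holNorm, hS0]
    have hA : (⨆ x, |f x|) ≤ 0 := ciSup_le fun x => by simp [hf0]
    have hB : (⨆ p : {q : EuclideanSpace ℝ (Fin d) ×
        EuclideanSpace ℝ (Fin d) // q.1 ≠ q.2},
        |f p.val.1 - f p.val.2| / ‖p.val.1 - p.val.2‖ ^ β) ≤ 0 :=
      Real.iSup_le (fun p => by simp [hf0]) le_rfl
    nlinarith [hLβ]

end
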